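/- Let E be an Archimedean vector lattice and e ∈ E. If sup_{λ∈ℝ}(−λ²e) exists in E, then e ∈ E⁺ and the supremum equals 0. -/
import Mathlib


/-- In an Archimedean vector lattice, if `sup_{λ∈ℝ} (−λ²e)` exists,
then `e ∈ E⁺` and the supremum equals `0`. -/
theorem zero_square_archimedean {E : Type*} [Lattice E] [AddCommGroup E]
    [Module ℝ E] [CovariantClass E E (· + ·) (· ≤ ·)] [PosSMulMono ℝ E]
    (hArch : ∀ x y : E, (∀ n : ℕ, (n : ℝ) • x ≤ y) → x ≤ 0)
    (e : E) (s : E)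
    (hs : IsLUB (Set.range fun l : ℝ => -((l ^ 2) • e)) s) :
    0 ≤ e ∧ s = 0 := by
  have he : 0 ≤ e := by
    have h : -e ≤ 0 := by
      apply hArch (-e) s
      intro n
      have hmem : -((Real.sqrt n ^ 2) • e) ≤ s := hs.1 ⟨Real.sqrt n, rfl⟩
      rwa [Real.sq_sqrt (Nat.cast_nonneg n), ← smul_neg] at hmem
    simpa using neg_nonpos.mp h
  refine ⟨he, le_antisymm ?_ ?_⟩
  · apply hs.2
    rintro x ⟨l, rfl⟩
    simp only [neg_nonpos]
    exact smul_nonneg (sq_nonneg l) he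
  · have : -(((0:ℝ) ^ 2) • e) ≤ s := hs.1 ⟨0, rfl⟩
    simpa using this
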